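/- In the above setup, for every t ∈ ℕ the aggregated dual iterates satisfy the uniform disagreement bound Σ_{i=1}^H ‖λ_i^{t+1} − (1/H)Σ_{j=1}^H λ_j^{t+1}‖² ≤ 4H³β²ψ²/(ε³·M²), where ε := 1 − κ − 8√(ρH) > 0. -/

import Mathlib

set_option linter.unusedSectionVars false

section helpers
variable {H : ℕ} {W : Type*} [NormedAddCommGroup W] [InnerProductSpace ℝ W]

lemma bdb_cs (a b : Fin H → W) :
    ∑ i, ‖a i‖ * ‖b i‖ ≤ Real.sqrt (∑ i, ‖a i‖^2) * Real.sqrt (∑ i, ‖b i‖^2) := by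
  have h := Finset.sum_mul_sq_le_sq_mul_sq Finset.univ (fun i => ‖a i‖) (fun i => ‖b i‖)
  have h1 : (0:ℝ) ≤ ∑ i, ‖a i‖ * ‖b i‖ :=
    Finset.sum_nonneg fun i _ => mul_nonneg (norm_nonneg _) (norm_nonneg _)
  calc ∑ i, ‖a i‖ * ‖b i‖ = Real.sqrt ((∑ i, ‖a i‖ * ‖b i‖)^2) := (Real.sqrt_sq h1).symm
    _ ≤ Real.sqrt ((∑ i, ‖a i‖^2) * ∑ i, ‖b i‖^2) := Real.sqrt_le_sqrt h
    _ = _ := Real.sqrt_mul (by positivity) _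

lemma bdb_tri (a b : Fin H → W) :
    Real.sqrt (∑ i, ‖a i + b i‖^2)
      ≤ Real.sqrt (∑ i, ‖a i‖^2) + Real.sqrt (∑ i, ‖b i‖^2) := by
  set A := Real.sqrt (∑ i, ‖a i‖^2) with hA
  set B := Real.sqrt (∑ i, ‖b i‖^2) with hB
  have hA2 : A^2 = ∑ i, ‖a i‖^2 := Real.sq_sqrt (by positivity)
  have hB2 : B^2 = ∑ i, ‖b i‖^2 := Real.sq_sqrt (by positivity)
  have hcs := bdb_cs a b
  have key : ∑ i, ‖a i + b i‖^2 ≤ (A + B)^2 := by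
    have step : ∑ i, ‖a i + b i‖^2 ≤ ∑ i, (‖a i‖^2 + 2*(‖a i‖*‖b i‖) + ‖b i‖^2) := by
      refine Finset.sum_le_sum fun i _ => ?_
      have := norm_add_le (a i) (b i)
      nlinarith [norm_nonneg (a i + b i), norm_nonneg (a i), norm_nonneg (b i)]
    rw [Finset.sum_add_distrib, Finset.sum_add_distrib, ← Finset.mul_sum] at step
    nlinarith
  calc Real.sqrt (∑ i, ‖a i + b i‖^2) ≤ Real.sqrt ((A+B)^2) := Real.sqrt_le_sqrt key
    _ = A + B := Real.sqrt_sq (by positivity)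

lemma bdb_smul (r : ℝ) (a : Fin H → W) :
    Real.sqrt (∑ i, ‖r • a i‖^2) = |r| * Real.sqrt (∑ i, ‖a i‖^2) := by
  have : ∑ i, ‖r • a i‖^2 = r^2 * ∑ i, ‖a i‖^2 := by
    simp [norm_smul, mul_pow, Finset.mul_sum, sq_abs]
  rw [this, Real.sqrt_mul (sq_nonneg r), Real.sqrt_sq_eq_abs]

lemma bdb_var (x : Fin H → W) :
    ∑ i, ‖x i - (H:ℝ)⁻¹ • ∑ j, x j‖^2 ≤ ∑ i, ‖x i‖^2 := by
  rcases Nat.eq_zero_or_pos H with h0 | hH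
  · subst h0; simp
  set m := (H:ℝ)⁻¹ • ∑ j, x j with hm
  have hsum : ∑ j, x j = (H:ℝ) • m := by
    rw [hm, smul_smul, mul_inv_cancel₀ (by positivity), one_smul]
  have expand : ∀ i, ‖x i - m‖^2 = ‖x i‖^2 - 2 * inner ℝ (x i) m + ‖m‖^2 := by
    intro i
    rw [norm_sub_sq_real]
  have hsi : ∑ i, (inner ℝ (x i) m : ℝ) = (H:ℝ) * ‖m‖^2 := by
    rw [← sum_inner, hsum, real_inner_smul_left, real_inner_self_eq_norm_sq]
  calc ∑ i, ‖x i - m‖^2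
      = ∑ i, (‖x i‖^2 - 2 * inner ℝ (x i) m + ‖m‖^2) :=
        Finset.sum_congr rfl fun i _ => expand i
    _ = ∑ i, ‖x i‖^2 - 2 * ((H:ℝ) * ‖m‖^2) + (H:ℝ) * ‖m‖^2 := by
        rw [Finset.sum_add_distrib, Finset.sum_sub_distrib, ← Finset.mul_sum, hsi]
        simp [Finset.card_univ, mul_comm]
    _ ≤ ∑ i, ‖x i‖^2 := by
        have h0 : (0:ℝ) ≤ (H:ℝ) * ‖m‖^2 :=
          mul_nonneg (Nat.cast_nonneg H) (sq_nonneg _)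
        linarith

lemma bdb_jensen (w : Fin H → ℝ) (hw : ∀ i, 0 ≤ w i) (hw1 : ∑ i, w i = 1)
    (u : Fin H → W) :
    ‖∑ j, w j • u j‖^2 ≤ ∑ j, w j * ‖u j‖^2 := by
  have h1 : ‖∑ j, w j • u j‖ ≤ ∑ j, w j * ‖u j‖ := by
    refine (norm_sum_le _ _).trans ?_
    refine Finset.sum_le_sum fun j _ => ?_
    rw [norm_smul, Real.norm_eq_abs, abs_of_nonneg (hw j)]
  have h2 : (∑ j, w j * ‖u j‖)^2 ≤ (∑ j, w j) * ∑ j, w j * ‖u j‖^2 := by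
    have := Finset.sum_mul_sq_le_sq_mul_sq Finset.univ
      (fun j => Real.sqrt (w j)) (fun j => Real.sqrt (w j) * ‖u j‖)
    calc (∑ j, w j * ‖u j‖)^2
        = (∑ j, Real.sqrt (w j) * (Real.sqrt (w j) * ‖u j‖))^2 := by
          congr 1; refine Finset.sum_congr rfl fun j _ => ?_
          rw [← mul_assoc, Real.mul_self_sqrt (hw j)]
      _ ≤ (∑ j, Real.sqrt (w j)^2) * ∑ j, (Real.sqrt (w j) * ‖u j‖)^2 := this
      _ = (∑ j, w j) * ∑ j, w j * ‖u j‖^2 := by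
          congr 1
          · exact Finset.sum_congr rfl fun j _ => Real.sq_sqrt (hw j)
          · refine Finset.sum_congr rfl fun j _ => ?_
            rw [mul_pow, Real.sq_sqrt (hw j)]
  have h0 : 0 ≤ ∑ j, w j * ‖u j‖ :=
    Finset.sum_nonneg fun j _ => mul_nonneg (hw j) (norm_nonneg _)
  calc ‖∑ j, w j • u j‖^2 ≤ (∑ j, w j * ‖u j‖)^2 := by
        exact pow_le_pow_left₀ (norm_nonneg _) h1 2
    _ ≤ (∑ j, w j) * ∑ j, w j * ‖u j‖^2 := h2
    _ = ∑ j, w j * ‖u j‖^2 := by rw [hw1, one_mul]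

lemma bdb_sum_apply {d n : ℕ} (f : Fin n → EuclideanSpace ℝ (Fin d)) (k : Fin d) :
    (∑ j, f j) k = ∑ j, f j k := by
  induction (Finset.univ : Finset (Fin n)) using Finset.cons_induction with
  | empty => rfl
  | cons a s ha ih => rw [Finset.sum_cons, Finset.sum_cons, PiLp.add_apply, ih]

lemma bdb_mat {d : ℕ} (A : Matrix (Fin H) (Fin H) ℝ)
    (v : Fin H → EuclideanSpace ℝ (Fin d)) :
    ∑ i, ‖∑ j, A i j • v j‖^2
      ≤ ‖LinearMap.toContinuousLinearMap (Matrix.toEuclideanLin A)‖^2 * ∑ j, ‖v j‖^2 := by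
  set C := ‖LinearMap.toContinuousLinearMap (Matrix.toEuclideanLin A)‖ with hC
  have hnorm_sq : ∀ (x : EuclideanSpace ℝ (Fin d)), ‖x‖^2 = ∑ k, (x k)^2 := by
    intro x
    rw [EuclideanSpace.norm_eq, Real.sq_sqrt (by positivity)]
    exact Finset.sum_congr rfl fun k _ => by rw [Real.norm_eq_abs, sq_abs]
  have hnorm_sqH : ∀ (x : EuclideanSpace ℝ (Fin H)), ‖x‖^2 = ∑ k, (x k)^2 := by
    intro x
    rw [EuclideanSpace.norm_eq, Real.sq_sqrt (by positivity)]
    exact Finset.sum_congr rfl fun k _ => by rw [Real.norm_eq_abs, sq_abs]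
  have key : ∀ k : Fin d,
      ∑ i, (∑ j, A i j * v j k)^2 ≤ C^2 * ∑ j, (v j k)^2 := by
    intro k
    set u : EuclideanSpace ℝ (Fin H) := (WithLp.equiv 2 (Fin H → ℝ)).symm (fun j => v j k)
    have hb : ‖Matrix.toEuclideanLin A u‖ ≤ C * ‖u‖ := by
      rw [hC]
      exact (LinearMap.toContinuousLinearMap (Matrix.toEuclideanLin A)).le_opNorm u
    have hb2 : ‖Matrix.toEuclideanLin A u‖^2 ≤ C^2 * ‖u‖^2 := by
      have h := pow_le_pow_left₀ (norm_nonneg _) hb 2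
      rwa [mul_pow] at h
    have hLHS : ‖Matrix.toEuclideanLin A u‖^2 = ∑ i, (∑ j, A i j * v j k)^2 := by
      rw [hnorm_sqH]
      refine Finset.sum_congr rfl fun i _ => ?_
      congr 1
    have hu : ‖u‖^2 = ∑ j, (v j k)^2 := hnorm_sqH u
    rw [hLHS, hu] at hb2
    exact hb2
  calc ∑ i, ‖∑ j, A i j • v j‖^2
      = ∑ i, ∑ k, ((∑ j, A i j • v j : EuclideanSpace ℝ (Fin d)) k)^2 :=
        Finset.sum_congr rfl fun i _ => hnorm_sq _
    _ = ∑ i, ∑ k, (∑ j, A i j * v j k)^2 := by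
        refine Finset.sum_congr rfl fun i _ => Finset.sum_congr rfl fun k _ => ?_
        rw [bdb_sum_apply]
        rfl
    _ = ∑ k, ∑ i, (∑ j, A i j * v j k)^2 := Finset.sum_comm
    _ ≤ ∑ k, C^2 * ∑ j, (v j k)^2 := Finset.sum_le_sum fun k _ => key k
    _ = C^2 * ∑ j, ∑ k, (v j k)^2 := by rw [← Finset.mul_sum, Finset.sum_comm]
    _ = C^2 * ∑ j, ‖v j‖^2 := by
        congr 1; exact Finset.sum_congr rfl fun j _ => (hnorm_sq _).symm

end helpers
set_option maxHeartbeats 1000000 in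
/-- **Uniform disagreement bound for the aggregated dual iterates of the
Byzantine-resilient Algorithm 2 (Lemma 4).** -/

theorem byzantine_dual_disagreement_bound
    (d H M : ℕ) (hH : 1 ≤ H) (hHM : H ≤ M)
    (β θ : ℝ) (hβ : 0 ≤ β) (hθ : 0 ≤ θ) (hβθ : β * θ ≤ 2)
    (ψ : ℝ) (hψ : 0 ≤ ψ)
    (Emat : Matrix (Fin H) (Fin H) ℝ)
    (hEnn : ∀ i j, 0 ≤ Emat i j)
    (hErow : ∀ i, ∑ j, Emat i j = 1)
    (κ : ℝ)
    (hκ : κ = ‖LinearMap.toContinuousLinearMap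
        (Matrix.toEuclideanLin
          (Emat - Matrix.of fun _ j => (H : ℝ)⁻¹ * ∑ k, Emat k j))‖ ^ 2)
    (ρ : ℝ) (hρ : 0 ≤ ρ) (hρκ : 8 * Real.sqrt (ρ * H) < 1 - κ)
    (ε : ℝ) (hε : ε = 1 - κ - 8 * Real.sqrt (ρ * H))
    (g : Fin H → ℕ → EuclideanSpace ℝ (Fin d))
    (hg : ∀ i t, ‖g i t‖ ≤ ψ)
    (lam lamhalf : Fin H → ℕ → EuclideanSpace ℝ (Fin d))
    (hlam0 : ∀ i, lam i 0 = 0)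
    (hlamhalf : ∀ i t,
      lamhalf i t = (1 - β * θ) • lam i t + (β * ((H : ℝ) / M)) • g i t)
    (hProp1 : ∀ i t,
      ‖lam i (t + 1) - ∑ j, Emat i j • lamhalf j t‖ ^ 2
        ≤ ρ * ∑ j, Emat i j
            * ‖lamhalf j t - ∑ k, Emat i k • lamhalf k t‖ ^ 2) :
    ∀ t, ∑ i, ‖lam i (t + 1) - (H : ℝ)⁻¹ • ∑ j, lam j (t + 1)‖ ^ 2
      ≤ 4 * (H : ℝ) ^ 3 * β ^ 2 * ψ ^ 2 / (ε ^ 3 * (M : ℝ) ^ 2) := by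
  have hH0 : (0:ℝ) < H := by exact_mod_cast hH
  have hM0 : (0:ℝ) < M := by exact_mod_cast lt_of_lt_of_le (by exact_mod_cast hH) (by exact_mod_cast hHM)
  set s : ℝ := Real.sqrt (ρ * H) with hs_def
  have hs : 0 ≤ s := Real.sqrt_nonneg _
  have hs2 : s ^ 2 = ρ * H := Real.sq_sqrt (by positivity)
  have hκ0 : 0 ≤ κ := hκ ▸ sq_nonneg _
  have hε0 : 0 < ε := by rw [hε]; linarith
  have hε1 : ε ≤ 1 := by rw [hε]; linarith
  -- the contraction factor
  have hsqrtκ : Real.sqrt κ ≤ 1 - (ε + 8 * s) / 2 := by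
    have hκval : κ = 1 - ε - 8 * s := by rw [hε]; ring
    have h1 : ε + 8 * s ≤ 1 := by rw [hκval] at hκ0; linarith
    have h2 : κ ≤ (1 - (ε + 8 * s) / 2) ^ 2 := by nlinarith [sq_nonneg (ε + 8 * s)]
    calc Real.sqrt κ ≤ Real.sqrt ((1 - (ε + 8 * s) / 2) ^ 2) := Real.sqrt_le_sqrt h2
      _ = 1 - (ε + 8 * s) / 2 := Real.sqrt_sq (by linarith)
  have hγ : Real.sqrt κ + 2 * s ≤ 1 - ε / 2 := by linarith
  have hγ0 : 0 ≤ Real.sqrt κ + 2 * s := by positivity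
  set c : ℝ := β * ((H:ℝ) / M) * (Real.sqrt (H:ℝ) * ψ) with hc_def
  have hc0 : 0 ≤ c := by positivity
  set S : ℕ → ℝ := fun t => Real.sqrt (∑ i, ‖lam i t - (H:ℝ)⁻¹ • ∑ j, lam j t‖ ^ 2)
    with hS_def
  have hS0 : ∀ t, 0 ≤ S t := fun t => Real.sqrt_nonneg _
  set A : Matrix (Fin H) (Fin H) ℝ :=
    Emat - Matrix.of (fun _ j => (H : ℝ)⁻¹ * ∑ k, Emat k j) with hA_def
  have hrowA : ∀ i, ∑ j, A i j = 0 := by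
    intro i
    have hEtot : ∑ j, ∑ k, Emat k j = (H:ℝ) := by
      rw [Finset.sum_comm]
      simp [hErow]
    simp only [hA_def, Matrix.sub_apply, Matrix.of_apply, Finset.sum_sub_distrib]
    rw [hErow i, ← Finset.mul_sum, hEtot, inv_mul_cancel₀ (ne_of_gt hH0), sub_self]
  -- main induction : S t ≤ 2c/ε
  have main : ∀ t, S t ≤ 2 * c / ε := by
    intro t
    induction t with
    | zero =>
      have : S 0 = 0 := by
        simp [hS_def, hlam0]
      rw [this]; positivity
    | succ t ih =>
      -- abbreviations for this step
      have hxm : ∀ i, lamhalf i t - (H:ℝ)⁻¹ • ∑ j, lamhalf j t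
          = (1 - β*θ) • (lam i t - (H:ℝ)⁻¹ • ∑ j, lam j t)
            + (β * ((H:ℝ)/M)) • (g i t - (H:ℝ)⁻¹ • ∑ j, g j t) := by
        intro i
        rw [hlamhalf i t, Finset.sum_congr rfl (fun j _ => hlamhalf j t),
          Finset.sum_add_distrib, ← Finset.smul_sum, ← Finset.smul_sum]
        module
      -- disagreement of half-step
      set X : ℝ := ∑ i, ‖lamhalf i t - (H:ℝ)⁻¹ • ∑ j, lamhalf j t‖ ^ 2 with hX_def
      have hX0 : 0 ≤ X := by positivity
      have hSX : Real.sqrt X ≤ S t + c := by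
        have htri : Real.sqrt X ≤
            Real.sqrt (∑ i, ‖(1 - β*θ) • (lam i t - (H:ℝ)⁻¹ • ∑ j, lam j t)‖ ^ 2)
            + Real.sqrt (∑ i, ‖(β * ((H:ℝ)/M)) • (g i t - (H:ℝ)⁻¹ • ∑ j, g j t)‖ ^ 2) := by
          rw [hX_def, Finset.sum_congr rfl (fun i _ => by rw [hxm i])]
          exact bdb_tri _ _
        rw [bdb_smul, bdb_smul] at htri
        have h1 : |1 - β*θ| ≤ 1 := by
          have : 0 ≤ β * θ := mul_nonneg hβ hθ
          rw [abs_le]; constructor <;> linarith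
        have h2 : |β * ((H:ℝ)/M)| = β * ((H:ℝ)/M) := abs_of_nonneg (by positivity)
        have h3 : Real.sqrt (∑ i, ‖g i t - (H:ℝ)⁻¹ • ∑ j, g j t‖ ^ 2)
            ≤ Real.sqrt (H:ℝ) * ψ := by
          have hv := bdb_var (fun i => g i t)
          have hb : ∑ i, ‖g i t‖ ^ 2 ≤ (H:ℝ) * ψ ^ 2 := by
            calc ∑ i, ‖g i t‖ ^ 2 ≤ ∑ _i : Fin H, ψ ^ 2 :=
                  Finset.sum_le_sum fun i _ =>
                    pow_le_pow_left₀ (norm_nonneg _) (hg i t) 2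
              _ = (H:ℝ) * ψ ^ 2 := by simp [mul_comm]
          calc Real.sqrt (∑ i, ‖g i t - (H:ℝ)⁻¹ • ∑ j, g j t‖ ^ 2)
              ≤ Real.sqrt ((H:ℝ) * ψ ^ 2) := Real.sqrt_le_sqrt (hv.trans hb)
            _ = Real.sqrt (H:ℝ) * ψ := by
                rw [Real.sqrt_mul (le_of_lt hH0), Real.sqrt_sq hψ]
        have hSnn := hS0 t
        have hgd0 : 0 ≤ Real.sqrt (∑ i, ‖g i t - (H:ℝ)⁻¹ • ∑ j, g j t‖ ^ 2) :=
          Real.sqrt_nonneg _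
        calc Real.sqrt X ≤ |1 - β*θ| * S t
              + |β * ((H:ℝ)/M)| * Real.sqrt (∑ i, ‖g i t - (H:ℝ)⁻¹ • ∑ j, g j t‖ ^ 2) :=
              htri
          _ ≤ 1 * S t + (β * ((H:ℝ)/M)) * (Real.sqrt (H:ℝ) * ψ) := by
              rw [h2]
              have := mul_le_mul_of_nonneg_left h3 (show (0:ℝ) ≤ β * ((H:ℝ)/M) by positivity)
              have := mul_le_mul_of_nonneg_right h1 hSnn
              gcongr
          _ = S t + c := by rw [one_mul, hc_def]
      -- the error terms
      have herr_bound : ∑ i, ‖lam i (t+1) - ∑ j, Emat i j • lamhalf j t‖ ^ 2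
          ≤ 4 * (ρ * (H:ℝ)) * X := by
        set m : EuclideanSpace ℝ (Fin d) := (H:ℝ)⁻¹ • ∑ j, lamhalf j t with hm_def
        have step1 : ∀ i, ∑ j, Emat i j
            * ‖lamhalf j t - ∑ k, Emat i k • lamhalf k t‖ ^ 2
            ≤ 4 * ∑ j, Emat i j * ‖lamhalf j t - m‖ ^ 2 := by
          intro i
          have hlbar : (∑ k, Emat i k • lamhalf k t) - m
              = ∑ k, Emat i k • (lamhalf k t - m) := by
            simp only [smul_sub, Finset.sum_sub_distrib, ← Finset.sum_smul, hErow i, one_smul]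
          have hjensen : ‖(∑ k, Emat i k • lamhalf k t) - m‖ ^ 2
              ≤ ∑ j, Emat i j * ‖lamhalf j t - m‖ ^ 2 := by
            rw [hlbar]
            exact bdb_jensen (fun k => Emat i k) (hEnn i) (hErow i) _
          have hpt : ∀ j, ‖lamhalf j t - ∑ k, Emat i k • lamhalf k t‖ ^ 2
              ≤ 2 * ‖lamhalf j t - m‖ ^ 2
                + 2 * ‖(∑ k, Emat i k • lamhalf k t) - m‖ ^ 2 := by
            intro j
            have hid : lamhalf j t - ∑ k, Emat i k • lamhalf k t
                = (lamhalf j t - m) - ((∑ k, Emat i k • lamhalf k t) - m) := by abel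
            rw [hid]
            have htr := norm_sub_le (lamhalf j t - m) ((∑ k, Emat i k • lamhalf k t) - m)
            have hsq := pow_le_pow_left₀ (norm_nonneg _) htr 2
            nlinarith [hsq,
              sq_nonneg (‖lamhalf j t - m‖ - ‖(∑ k, Emat i k • lamhalf k t) - m‖)]
          calc ∑ j, Emat i j * ‖lamhalf j t - ∑ k, Emat i k • lamhalf k t‖ ^ 2
              ≤ ∑ j, Emat i j * (2 * ‖lamhalf j t - m‖ ^ 2
                + 2 * ‖(∑ k, Emat i k • lamhalf k t) - m‖ ^ 2) :=
                Finset.sum_le_sum fun j _ =>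
                  mul_le_mul_of_nonneg_left (hpt j) (hEnn i j)
            _ = 2 * (∑ j, Emat i j * ‖lamhalf j t - m‖ ^ 2)
                + 2 * ‖(∑ k, Emat i k • lamhalf k t) - m‖ ^ 2 := by
                rw [Finset.sum_congr rfl (fun j _ => by ring :
                  ∀ j ∈ Finset.univ, Emat i j * (2 * ‖lamhalf j t - m‖ ^ 2
                    + 2 * ‖(∑ k, Emat i k • lamhalf k t) - m‖ ^ 2)
                  = 2 * (Emat i j * ‖lamhalf j t - m‖ ^ 2)
                    + Emat i j * (2 * ‖(∑ k, Emat i k • lamhalf k t) - m‖ ^ 2))]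
                rw [Finset.sum_add_distrib, ← Finset.mul_sum, ← Finset.sum_mul, hErow i]
                ring
            _ ≤ 4 * ∑ j, Emat i j * ‖lamhalf j t - m‖ ^ 2 := by linarith
        have step2 : ∑ i, ∑ j, Emat i j * ‖lamhalf j t - m‖ ^ 2 ≤ (H:ℝ) * X := by
          rw [Finset.sum_comm]
          have : ∀ j, ∑ i, Emat i j * ‖lamhalf j t - m‖ ^ 2
              ≤ (H:ℝ) * ‖lamhalf j t - m‖ ^ 2 := by
            intro j
            have hcol : ∑ i, Emat i j ≤ (H:ℝ) := by
              calc ∑ i, Emat i j ≤ ∑ _i : Fin H, (1:ℝ) :=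
                  Finset.sum_le_sum fun i _ => by
                    calc Emat i j ≤ ∑ j', Emat i j' :=
                        Finset.single_le_sum (fun j' _ => hEnn i j') (Finset.mem_univ j)
                      _ = 1 := hErow i
                _ = (H:ℝ) := by simp
            rw [← Finset.sum_mul]
            exact mul_le_mul_of_nonneg_right hcol (by positivity)
          calc ∑ j, ∑ i, Emat i j * ‖lamhalf j t - m‖ ^ 2
              ≤ ∑ j, (H:ℝ) * ‖lamhalf j t - m‖ ^ 2 := Finset.sum_le_sum fun j _ => this j
            _ = (H:ℝ) * X := by rw [← Finset.mul_sum]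
        calc ∑ i, ‖lam i (t+1) - ∑ j, Emat i j • lamhalf j t‖ ^ 2
            ≤ ∑ i, ρ * ∑ j, Emat i j * ‖lamhalf j t - ∑ k, Emat i k • lamhalf k t‖ ^ 2 :=
              Finset.sum_le_sum fun i _ => hProp1 i t
          _ ≤ ∑ i, ρ * (4 * ∑ j, Emat i j * ‖lamhalf j t - m‖ ^ 2) :=
              Finset.sum_le_sum fun i _ => mul_le_mul_of_nonneg_left (step1 i) hρ
          _ = 4 * ρ * ∑ i, ∑ j, Emat i j * ‖lamhalf j t - m‖ ^ 2 := by
              rw [Finset.mul_sum]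
              exact Finset.sum_congr rfl fun i _ => by ring
          _ ≤ 4 * ρ * ((H:ℝ) * X) := by
              exact mul_le_mul_of_nonneg_left step2 (by positivity)
          _ = 4 * (ρ * (H:ℝ)) * X := by ring
      -- the decomposition of the full step deviation
      have hydev : ∀ i, lam i (t+1) - (H:ℝ)⁻¹ • ∑ j, lam j (t+1)
          = (∑ j, A i j • (lamhalf j t - (H:ℝ)⁻¹ • ∑ j', lamhalf j' t))
            + ((lam i (t+1) - ∑ j, Emat i j • lamhalf j t)
               - (H:ℝ)⁻¹ • ∑ j, (lam j (t+1) - ∑ k, Emat j k • lamhalf k t)) := by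
        intro i
        set m : EuclideanSpace ℝ (Fin d) := (H:ℝ)⁻¹ • ∑ j', lamhalf j' t with hm_def
        have hAapp : ∑ j, A i j • (lamhalf j t - m)
            = (∑ j, Emat i j • lamhalf j t)
              - (H:ℝ)⁻¹ • ∑ k, ∑ j, Emat k j • lamhalf j t := by
          have h1 : ∑ j, A i j • (lamhalf j t - m) = ∑ j, A i j • lamhalf j t := by
            simp only [smul_sub, Finset.sum_sub_distrib, ← Finset.sum_smul, hrowA i,
              zero_smul, sub_zero]
          rw [h1]
          have h2 : ∀ j, A i j • lamhalf j t
              = Emat i j • lamhalf j t - ((H:ℝ)⁻¹ * ∑ k, Emat k j) • lamhalf j t := by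
            intro j
            rw [hA_def]
            simp [Matrix.sub_apply, sub_smul]
          rw [Finset.sum_congr rfl (fun j _ => h2 j), Finset.sum_sub_distrib]
          congr 1
          rw [Finset.sum_comm, Finset.smul_sum]
          refine Finset.sum_congr rfl fun j _ => ?_
          rw [← Finset.sum_smul, ← smul_smul]
        rw [hAapp]
        have hsumy : ∑ j, lam j (t+1)
            = (∑ k, ∑ j, Emat k j • lamhalf j t)
              + ∑ j, (lam j (t+1) - ∑ k, Emat j k • lamhalf k t) := by
          rw [← Finset.sum_add_distrib]
          exact Finset.sum_congr rfl fun j _ => by abel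
        rw [hsumy, smul_add]
        abel
      -- the contraction of the A part
      have hApart : ∑ i, ‖∑ j, A i j • (lamhalf j t - (H:ℝ)⁻¹ • ∑ j', lamhalf j' t)‖ ^ 2
          ≤ κ * X := by
        have := bdb_mat A (fun j => lamhalf j t - (H:ℝ)⁻¹ • ∑ j', lamhalf j' t)
        rw [hκ, hA_def]
        exact this
      -- combine
      have hstep : S (t+1) ≤ (Real.sqrt κ + 2 * s) * Real.sqrt X := by
        have htri : S (t+1) ≤
            Real.sqrt (∑ i, ‖∑ j, A i j • (lamhalf j t - (H:ℝ)⁻¹ • ∑ j', lamhalf j' t)‖ ^ 2)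
            + Real.sqrt (∑ i, ‖(lam i (t+1) - ∑ j, Emat i j • lamhalf j t)
               - (H:ℝ)⁻¹ • ∑ j, (lam j (t+1) - ∑ k, Emat j k • lamhalf k t)‖ ^ 2) := by
          have : S (t+1) = Real.sqrt (∑ i,
              ‖(∑ j, A i j • (lamhalf j t - (H:ℝ)⁻¹ • ∑ j', lamhalf j' t))
              + ((lam i (t+1) - ∑ j, Emat i j • lamhalf j t)
               - (H:ℝ)⁻¹ • ∑ j, (lam j (t+1) - ∑ k, Emat j k • lamhalf k t))‖ ^ 2) := by
            rw [hS_def]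
            exact congrArg Real.sqrt (Finset.sum_congr rfl fun i _ => by rw [hydev i])
          rw [this]
          exact bdb_tri _ _
        have hA2 : Real.sqrt (∑ i, ‖∑ j, A i j •
              (lamhalf j t - (H:ℝ)⁻¹ • ∑ j', lamhalf j' t)‖ ^ 2)
            ≤ Real.sqrt κ * Real.sqrt X := by
          calc _ ≤ Real.sqrt (κ * X) := Real.sqrt_le_sqrt hApart
            _ = Real.sqrt κ * Real.sqrt X := Real.sqrt_mul hκ0 X
        have hE2 : Real.sqrt (∑ i, ‖(lam i (t+1) - ∑ j, Emat i j • lamhalf j t)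
               - (H:ℝ)⁻¹ • ∑ j, (lam j (t+1) - ∑ k, Emat j k • lamhalf k t)‖ ^ 2)
            ≤ 2 * s * Real.sqrt X := by
          have hvar := bdb_var (fun i => lam i (t+1) - ∑ j, Emat i j • lamhalf j t)
          have hcomb : ∑ i, ‖(lam i (t+1) - ∑ j, Emat i j • lamhalf j t)
               - (H:ℝ)⁻¹ • ∑ j, (lam j (t+1) - ∑ k, Emat j k • lamhalf k t)‖ ^ 2
              ≤ (2 * s * Real.sqrt X) ^ 2 := by
            have h4 : (2 * s * Real.sqrt X) ^ 2 = 4 * (ρ * (H:ℝ)) * X := by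
              rw [mul_pow, mul_pow, hs2, Real.sq_sqrt hX0]; ring
            rw [h4]
            exact hvar.trans herr_bound
          calc _ ≤ Real.sqrt ((2 * s * Real.sqrt X) ^ 2) := Real.sqrt_le_sqrt hcomb
            _ = 2 * s * Real.sqrt X := Real.sqrt_sq (by positivity)
        calc S (t+1) ≤ _ := htri
          _ ≤ Real.sqrt κ * Real.sqrt X + 2 * s * Real.sqrt X := add_le_add hA2 hE2
          _ = (Real.sqrt κ + 2 * s) * Real.sqrt X := by ring
      -- final arithmetic
      have h1 : S (t+1) ≤ (1 - ε/2) * (2 * c / ε + c) := by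
        have hXnn : 0 ≤ Real.sqrt X := Real.sqrt_nonneg _
        have hb1 : Real.sqrt X ≤ 2 * c / ε + c := hSX.trans (by linarith)
        have hεhalf : 0 ≤ 1 - ε/2 := by linarith
        calc S (t+1) ≤ (Real.sqrt κ + 2 * s) * Real.sqrt X := hstep
          _ ≤ (1 - ε/2) * (2 * c / ε + c) := by
            apply mul_le_mul hγ hb1 hXnn hεhalf
      have h2 : (1 - ε/2) * (2 * c / ε + c) ≤ 2 * c / ε := by
        have heq : (1 - ε/2) * (2 * c / ε + c) = 2 * c / ε - ε * c / 2 := by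
          field_simp
          ring
        rw [heq]
        have : 0 ≤ ε * c / 2 := by positivity
        linarith
      exact h1.trans h2
  -- conclude
  intro t
  have hsum_nn : 0 ≤ ∑ i, ‖lam i (t+1) - (H:ℝ)⁻¹ • ∑ j, lam j (t+1)‖ ^ 2 := by positivity
  have hSsq : ∑ i, ‖lam i (t+1) - (H:ℝ)⁻¹ • ∑ j, lam j (t+1)‖ ^ 2 = S (t+1) ^ 2 := by
    rw [hS_def]
    exact (Real.sq_sqrt hsum_nn).symm
  rw [hSsq]
  have hb : S (t+1) ^ 2 ≤ (2 * c / ε) ^ 2 :=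
    pow_le_pow_left₀ (hS0 (t+1)) (main (t+1)) 2
  have hc2 : c ^ 2 = β ^ 2 * (H:ℝ) ^ 3 * ψ ^ 2 / (M:ℝ) ^ 2 := by
    rw [hc_def, mul_pow, mul_pow, div_pow, mul_pow, Real.sq_sqrt (le_of_lt hH0)]
    ring
  have hfin : (2 * c / ε) ^ 2 ≤ 4 * (H : ℝ) ^ 3 * β ^ 2 * ψ ^ 2 / (ε ^ 3 * (M : ℝ) ^ 2) := by
    have h1 : (2 * c / ε) ^ 2 = 4 * (H : ℝ) ^ 3 * β ^ 2 * ψ ^ 2 / (ε ^ 2 * (M:ℝ) ^ 2) := by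
      rw [div_pow, mul_pow, hc2]
      field_simp
      ring
    rw [h1]
    apply div_le_div_of_nonneg_left (by positivity) (by positivity)
    have h3 : ε ^ 3 ≤ ε ^ 2 :=
      pow_le_pow_of_le_one (le_of_lt hε0) hε1 (by norm_num)
    exact mul_le_mul_of_nonneg_right h3 (sq_nonneg (M:ℝ))
  exact hb.trans hfin
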